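/- (Hölder-type inequality for the σ-norm pairing) Let σ be a spectral function, Y ∈ L_σ and Z ∈ L¹ with ‖Z‖_σ* < ∞. Then |E[Y·Z]| ≤ ‖Y‖_σ · ‖Z‖_σ*, where ‖Y‖_σ = ∫₀¹ σ(u) F_{|Y|}^{-1}(u) du and ‖Z‖_σ* = inf{η ≥ 0 : ∫_α¹ F_{|Z|}^{-1}(u) du ≤ η ∫_α¹ σ(u) du for all α ∈ [0,1)}. -/

import Mathlib

open MeasureTheory ENNReal
open Set

/-- The (left-continuous) quantile function of X: F_X^{-1}(p) = inf{y : P(X ≤ y) ≥ p}. -/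
noncomputable def quantile {Ω : Type*} [MeasurableSpace Ω] (μ : Measure Ω)
    (X : Ω → ℝ) (p : ℝ) : ℝ :=
  sInf {y : ℝ | p ≤ (μ {ω | X ω ≤ y}).toReal}

section aux

variable {Ω : Type*} [MeasurableSpace Ω] (μ : Measure Ω) [IsProbabilityMeasure μ]
  (f : Ω → ℝ)

lemma hl_c_mono : Monotone (fun t => (μ {ω | |f ω| ≤ t}).toReal) := by
  intro a b hab
  exact ENNReal.toReal_mono (measure_ne_top μ _)
    (measure_mono (fun ω h => le_trans h hab))

lemma hl_c_mem (t : ℝ) : (μ {ω | |f ω| ≤ t}).toReal ∈ Icc (0:ℝ) 1 := by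
  constructor
  · exact ENNReal.toReal_nonneg
  · rw [show (1:ℝ) = (μ Set.univ).toReal by simp]
    exact ENNReal.toReal_mono (measure_ne_top μ _) (measure_mono (subset_univ _))

lemma hl_c_neg {t : ℝ} (ht : t < 0) : (μ {ω | |f ω| ≤ t}).toReal = 0 := by
  have : {ω | |f ω| ≤ t} = ∅ := by
    ext ω; simp only [mem_setOf_eq, mem_empty_iff_false, iff_false, not_le]
    exact lt_of_lt_of_le ht (abs_nonneg _)
  simp [this]

lemma hl_S_nonempty {u : ℝ} (hu : u ∈ Ioo (0:ℝ) 1) :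
    {y : ℝ | u ≤ (μ {ω | |f ω| ≤ y}).toReal}.Nonempty := by
  by_contra h
  rw [Set.not_nonempty_iff_eq_empty] at h
  have hall : ∀ y : ℝ, (μ {ω | |f ω| ≤ y}).toReal < u := by
    intro y
    by_contra hy
    exact absurd (Set.eq_empty_iff_forall_notMem.mp h y (not_lt.mp hy)) (by simp)
  -- measure of union over n : ℕ of {|f| ≤ n} is univ
  have hU : ⋃ n : ℕ, {ω | |f ω| ≤ (n:ℝ)} = Set.univ := by
    ext ω; simp only [mem_iUnion, mem_setOf_eq, mem_univ, iff_true]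
    obtain ⟨n, hn⟩ := exists_nat_ge (|f ω|); exact ⟨n, hn⟩
  have hmono : Monotone (fun n : ℕ => {ω | |f ω| ≤ (n:ℝ)}) := by
    intro a b hab ω h
    simp only [mem_setOf_eq] at *
    exact le_trans h (by exact_mod_cast hab)
  have htend : Filter.Tendsto (fun n : ℕ => μ {ω | |f ω| ≤ (n:ℝ)}) Filter.atTop
      (nhds (μ (⋃ n : ℕ, {ω | |f ω| ≤ (n:ℝ)}))) :=
    tendsto_measure_iUnion_atTop hmono
  rw [hU] at htend
  have htendR : Filter.Tendsto (fun n : ℕ => (μ {ω | |f ω| ≤ (n:ℝ)}).toReal)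
      Filter.atTop (nhds (μ Set.univ).toReal) :=
    (ENNReal.tendsto_toReal (measure_ne_top μ _)).comp htend
  have : (μ (Set.univ : Set Ω)).toReal ≤ u :=
    le_of_tendsto htendR (Filter.Eventually.of_forall fun n => (hall n).le)
  simp only [measure_univ, ENNReal.toReal_one] at this
  exact absurd (lt_of_lt_of_le hu.2 this) (lt_irrefl u)

lemma hl_S_bdd {u : ℝ} (hu : u ∈ Ioo (0:ℝ) 1) :
    BddBelow {y : ℝ | u ≤ (μ {ω | |f ω| ≤ y}).toReal} := by
  refine ⟨0, fun y hy => ?_⟩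
  simp only [mem_setOf_eq] at hy
  by_contra h
  rw [hl_c_neg μ f (not_le.mp h)] at hy
  exact absurd (lt_of_lt_of_le hu.1 hy) (lt_irrefl 0)

lemma quantile_nonneg {u : ℝ} (hu : u ∈ Ioo (0:ℝ) 1) :
    0 ≤ quantile μ (fun ω => |f ω|) u :=
  le_csInf (hl_S_nonempty μ f hu) fun y hy => by
    simp only [mem_setOf_eq] at hy
    by_contra h
    rw [hl_c_neg μ f (not_le.mp h)] at hy
    exact absurd (lt_of_lt_of_le hu.1 hy) (lt_irrefl 0)

/-- Key Galois property: quantile(u) ≤ t ↔ u ≤ F(t). -/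
lemma quantile_le_iff (hf : Measurable f) {u : ℝ} (hu : u ∈ Ioo (0:ℝ) 1) (t : ℝ) :
    quantile μ (fun ω => |f ω|) u ≤ t ↔ u ≤ (μ {ω | |f ω| ≤ t}).toReal := by
  constructor
  · intro h
    -- right continuity
    have hseq : ∀ n : ℕ, u ≤ (μ {ω | |f ω| ≤ t + ((n:ℝ)+1)⁻¹}).toReal := by
      intro n
      have hlt : quantile μ (fun ω => |f ω| ) u < t + ((n:ℝ)+1)⁻¹ :=
        lt_of_le_of_lt h (lt_add_of_pos_right _ (by positivity))
      obtain ⟨y, hy, hyt⟩ := (csInf_lt_iff (hl_S_bdd μ f hu) (hl_S_nonempty μ f hu)).mp hlt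
      exact le_trans hy (hl_c_mono μ f hyt.le)
    have hInter : ⋂ n : ℕ, {ω | |f ω| ≤ t + ((n:ℝ)+1)⁻¹} = {ω | |f ω| ≤ t} := by
      ext ω
      simp only [mem_iInter, mem_setOf_eq]
      constructor
      · intro h
        by_contra hc
        obtain ⟨n, hn⟩ := exists_nat_one_div_lt (sub_pos.mpr (not_le.mp hc))
        have := h n
        rw [one_div] at hn
        linarith
      · intro h n; have : (0:ℝ) < ((n:ℝ)+1)⁻¹ := by positivity
        linarith
    have hanti : Antitone (fun n : ℕ => {ω | |f ω| ≤ t + ((n:ℝ)+1)⁻¹}) := by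
      intro a b hab ω h
      simp only [mem_setOf_eq] at *
      have hab' : (a:ℝ) ≤ (b:ℝ) := Nat.cast_le.mpr hab
      have : ((b:ℝ)+1)⁻¹ ≤ ((a:ℝ)+1)⁻¹ := inv_anti₀ (by positivity) (by linarith)
      linarith
    have htend : Filter.Tendsto (fun n : ℕ => μ {ω | |f ω| ≤ t + ((n:ℝ)+1)⁻¹}) Filter.atTop
        (nhds (μ (⋂ n : ℕ, {ω | |f ω| ≤ t + ((n:ℝ)+1)⁻¹}))) :=
      tendsto_measure_iInter_atTop (fun n => (measurableSet_le hf.abs measurable_const).nullMeasurableSet)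
        hanti ⟨0, measure_ne_top μ _⟩
    rw [hInter] at htend
    have htendR : Filter.Tendsto (fun n : ℕ => (μ {ω | |f ω| ≤ t + ((n:ℝ)+1)⁻¹}).toReal)
        Filter.atTop (nhds (μ {ω | |f ω| ≤ t}).toReal) :=
      (ENNReal.tendsto_toReal (measure_ne_top μ _)).comp htend
    exact ge_of_tendsto' htendR hseq
  · intro h
    exact csInf_le (hl_S_bdd μ f hu) h


lemma quantile_nonpos_eq {p : ℝ} (hp : p ≤ 0) : quantile μ (fun ω => |f ω|) p = 0 := by
  have : {y : ℝ | p ≤ (μ {ω | |f ω| ≤ y}).toReal} = Set.univ := by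
    ext y; simp only [mem_setOf_eq, mem_univ, iff_true]
    exact le_trans hp ENNReal.toReal_nonneg
  rw [quantile, this]
  apply Real.sInf_of_not_bddBelow
  rintro ⟨b, hb⟩
  have := hb (mem_univ (b - 1))
  linarith

lemma quantile_gt_one_eq {p : ℝ} (hp : 1 < p) : quantile μ (fun ω => |f ω|) p = 0 := by
  have : {y : ℝ | p ≤ (μ {ω | |f ω| ≤ y}).toReal} = ∅ := by
    ext y; simp only [mem_setOf_eq, mem_empty_iff_false, iff_false, not_le]
    exact lt_of_le_of_lt (hl_c_mem μ f y).2 hp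
  rw [quantile, this, Real.sInf_empty]

lemma quantile_nonneg' {p : ℝ} (hp : 0 < p) : 0 ≤ quantile μ (fun ω => |f ω|) p := by
  by_cases hS : {y : ℝ | p ≤ (μ {ω | |f ω| ≤ y}).toReal}.Nonempty
  · refine le_csInf hS fun y hy => ?_
    simp only [mem_setOf_eq] at hy
    by_contra h
    rw [hl_c_neg μ f (not_le.mp h)] at hy
    exact absurd (lt_of_lt_of_le hp hy) (lt_irrefl 0)
  · rw [Set.not_nonempty_iff_eq_empty] at hS
    rw [quantile, hS, Real.sInf_empty]

lemma quantile_measurable (hf : Measurable f) :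
    Measurable (quantile μ (fun ω => |f ω|)) := by
  apply measurable_of_Iic
  intro x
  by_cases hx : 0 ≤ x
  · have heq : quantile μ (fun ω => |f ω|) ⁻¹' Iic x =
        (Iic 0 ∪ Ioi 1 ∪ (Ioo 0 1 ∩ Iic ((μ {ω | |f ω| ≤ x}).toReal))) ∪
          ({1} ∩ quantile μ (fun ω => |f ω|) ⁻¹' Iic x) := by
      ext p
      simp only [mem_preimage, mem_Iic, mem_union, mem_inter_iff, mem_Ioo, mem_Ioi,
        mem_singleton_iff]
      constructor
      · intro hq
        rcases le_or_gt p 0 with hp0 | hp0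
        · exact Or.inl (Or.inl (Or.inl hp0))
        rcases lt_trichotomy p 1 with hp1 | hp1 | hp1
        · exact Or.inl (Or.inr ⟨⟨hp0, hp1⟩, (quantile_le_iff μ f hf ⟨hp0, hp1⟩ x).mp hq⟩)
        · exact Or.inr ⟨hp1, hq⟩
        · exact Or.inl (Or.inl (Or.inr hp1))
      · rintro (((hp0 | hp1) | ⟨hp, hc⟩) | ⟨-, hq⟩)
        · rw [quantile_nonpos_eq μ f hp0]; exact hx
        · rw [quantile_gt_one_eq μ f hp1]; exact hx
        · exact (quantile_le_iff μ f hf hp x).mpr hc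
        · exact hq
    rw [heq]
    exact (((measurableSet_Iic.union measurableSet_Ioi).union
      (measurableSet_Ioo.inter measurableSet_Iic))).union
      ((Set.subsingleton_singleton.anti Set.inter_subset_left).measurableSet)
  · have heq : quantile μ (fun ω => |f ω|) ⁻¹' Iic x = ∅ := by
      ext p
      simp only [mem_preimage, mem_Iic, mem_empty_iff_false, iff_false, not_le]
      rcases le_or_gt p 0 with hp0 | hp0
      · rw [quantile_nonpos_eq μ f hp0]; linarith
      · exact lt_of_lt_of_le (not_le.mp hx) (quantile_nonneg' μ f hp0)
    rw [heq]; exact MeasurableSet.empty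


lemma quantile_section (hf : Measurable f) (t : ℝ) :
    {u : ℝ | u ∈ Ioo (0:ℝ) 1 ∧ t < quantile μ (fun ω => |f ω|) u} =
      Ioo ((μ {ω | |f ω| ≤ t}).toReal) 1 := by
  ext u
  simp only [mem_setOf_eq, mem_Ioo]
  constructor
  · rintro ⟨hu, ht⟩
    refine ⟨?_, hu.2⟩
    by_contra h
    exact absurd ((quantile_le_iff μ f hf hu t).mpr (not_lt.mp h)) (not_le.mpr ht)
  · rintro ⟨hc, hu1⟩
    have hu : u ∈ Ioo (0:ℝ) 1 := ⟨lt_of_le_of_lt (hl_c_mem μ f t).1 hc, hu1⟩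
    refine ⟨hu, ?_⟩
    by_contra h
    exact absurd ((quantile_le_iff μ f hf hu t).mp (not_lt.mp h)) (not_le.mpr hc)

lemma measure_gt_eq (hf : Measurable f) (t : ℝ) :
    μ {ω | t < |f ω|} = ENNReal.ofReal (1 - (μ {ω | |f ω| ≤ t}).toReal) := by
  have hc : {ω | t < |f ω|} = {ω | |f ω| ≤ t}ᶜ := by
    ext ω; simp [not_le]
  rw [hc, measure_compl (measurableSet_le hf.abs measurable_const) (measure_ne_top μ _),
    measure_univ, ENNReal.ofReal_sub _ ENNReal.toReal_nonneg, ENNReal.ofReal_one,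
    ENNReal.ofReal_toReal (measure_ne_top μ _)]

/-- Layer-cake: ∫₀¹ F_{|f|}^{-1}(u) du = E|f|. -/
lemma lintegral_quantile_eq (hf : Measurable f) :
    ∫⁻ u in Ioo (0:ℝ) 1, ENNReal.ofReal (quantile μ (fun ω => |f ω|) u) =
      ∫⁻ ω, ENNReal.ofReal |f ω| ∂μ := by
  set q := quantile μ (fun ω => |f ω|) with hq
  set ν := volume.restrict (Ioo (0:ℝ) 1) with hν
  have hqm : Measurable q := quantile_measurable μ f hf
  set A : Set (ℝ × ℝ) := {p | p.1 ∈ Ioo (0:ℝ) 1 ∧ 0 < p.2 ∧ p.2 < q p.1} with hA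
  set B : Set (Ω × ℝ) := {p | 0 < p.2 ∧ p.2 < |f p.1|} with hB
  have hAm : MeasurableSet A := by
    apply MeasurableSet.inter (measurableSet_Ioo.preimage measurable_fst)
    exact (measurableSet_lt measurable_const measurable_snd).inter
      (measurableSet_lt measurable_snd (hqm.comp measurable_fst))
  have hBm : MeasurableSet B :=
    (measurableSet_lt measurable_const measurable_snd).inter
      (measurableSet_lt measurable_snd ((hf.abs).comp measurable_fst))
  have h1 : ∫⁻ u in Ioo (0:ℝ) 1, ENNReal.ofReal (q u) = (ν.prod volume) A := by
    rw [Measure.prod_apply hAm]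
    refine setLIntegral_congr_fun measurableSet_Ioo ?_
    intro u hu
    beta_reduce
    have : Prod.mk u ⁻¹' A = Ioo 0 (q u) := by
      ext t; simp only [hA, mem_preimage, mem_setOf_eq, mem_Ioo]
      exact ⟨fun h => h.2, fun h => ⟨hu, h⟩⟩
    rw [this, Real.volume_Ioo, sub_zero]
  have h2 : (ν.prod volume) A = (μ.prod volume) B := by
    rw [Measure.prod_apply_symm hAm, Measure.prod_apply_symm hBm]
    apply lintegral_congr
    intro t
    rcases le_or_gt t 0 with ht | ht
    · have hA0 : (fun u => (u, t)) ⁻¹' A = ∅ := by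
        ext u; simp only [hA, mem_preimage, mem_setOf_eq, mem_empty_iff_false, iff_false]
        rintro ⟨-, h, -⟩; linarith
      have hB0 : (fun ω => (ω, t)) ⁻¹' B = ∅ := by
        ext ω; simp only [hB, mem_preimage, mem_setOf_eq, mem_empty_iff_false, iff_false]
        rintro ⟨h, -⟩; linarith
      rw [hA0, hB0]; simp
    · have hA1 : (fun u => (u, t)) ⁻¹' A = {u : ℝ | u ∈ Ioo (0:ℝ) 1 ∧ t < q u} := by
        ext u; simp only [hA, mem_preimage, mem_setOf_eq]
        exact ⟨fun h => ⟨h.1, h.2.2⟩, fun h => ⟨h.1, ht, h.2⟩⟩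
      have hB1 : (fun ω => (ω, t)) ⁻¹' B = {ω | t < |f ω|} := by
        ext ω; simp only [hB, mem_preimage, mem_setOf_eq]
        exact ⟨fun h => h.2, fun h => ⟨ht, h⟩⟩
      rw [hA1, hB1, hq, quantile_section μ f hf t, hν, Measure.restrict_apply measurableSet_Ioo,
        Set.inter_eq_left.mpr (fun u hu => Set.mem_Ioo.mpr
          ⟨lt_of_le_of_lt (hl_c_mem μ f t).1 (Set.mem_Ioo.mp hu).1, (Set.mem_Ioo.mp hu).2⟩),
        Real.volume_Ioo, measure_gt_eq μ f hf t]
  have h3 : (μ.prod volume) B = ∫⁻ ω, ENNReal.ofReal |f ω| ∂μ := by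
    rw [Measure.prod_apply hBm]
    apply lintegral_congr
    intro ω
    have : Prod.mk ω ⁻¹' B = Ioo 0 |f ω| := by
      ext t; simp only [hB, mem_preimage, mem_setOf_eq, mem_Ioo]
    rw [this, Real.volume_Ioo, sub_zero]
  rw [h1, h2, h3]


lemma hardy_littlewood (Y Z : Ω → ℝ) (hY : Measurable Y) (hZ : Measurable Z) :
    ∫⁻ ω, ENNReal.ofReal |Y ω| * ENNReal.ofReal |Z ω| ∂μ ≤
      ∫⁻ u in Ioo (0:ℝ) 1, ENNReal.ofReal (quantile μ (fun ω => |Y ω|) u) *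
        ENNReal.ofReal (quantile μ (fun ω => |Z ω|) u) := by
  set qY := quantile μ (fun ω => |Y ω|) with hqY
  set qZ := quantile μ (fun ω => |Z ω|) with hqZ
  set ν := volume.restrict (Ioo (0:ℝ) 1) with hν
  have hqYm : Measurable qY := quantile_measurable μ Y hY
  have hqZm : Measurable qZ := quantile_measurable μ Z hZ
  set A : Set (ℝ × (ℝ × ℝ)) :=
    {p | p.1 ∈ Ioo (0:ℝ) 1 ∧ (0 < p.2.1 ∧ p.2.1 < qY p.1) ∧ (0 < p.2.2 ∧ p.2.2 < qZ p.1)}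
    with hA
  set B : Set (Ω × (ℝ × ℝ)) :=
    {p | (0 < p.2.1 ∧ p.2.1 < |Y p.1|) ∧ (0 < p.2.2 ∧ p.2.2 < |Z p.1|)} with hB
  have hAm : MeasurableSet A := by
    refine (measurableSet_Ioo.preimage measurable_fst).inter (MeasurableSet.inter ?_ ?_)
    · exact (measurableSet_lt measurable_const measurable_snd.fst).inter
        (measurableSet_lt measurable_snd.fst (hqYm.comp measurable_fst))
    · exact (measurableSet_lt measurable_const measurable_snd.snd).inter
        (measurableSet_lt measurable_snd.snd (hqZm.comp measurable_fst))
  have hBm : MeasurableSet B := by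
    refine MeasurableSet.inter ?_ ?_
    · exact (measurableSet_lt measurable_const measurable_snd.fst).inter
        (measurableSet_lt measurable_snd.fst ((hY.abs).comp measurable_fst))
    · exact (measurableSet_lt measurable_const measurable_snd.snd).inter
        (measurableSet_lt measurable_snd.snd ((hZ.abs).comp measurable_fst))
  have h3 : ∫⁻ ω, ENNReal.ofReal |Y ω| * ENNReal.ofReal |Z ω| ∂μ =
      (μ.prod (volume : Measure (ℝ × ℝ))) B := by
    rw [Measure.prod_apply hBm]
    apply lintegral_congr
    intro ω
    have : Prod.mk ω ⁻¹' B = Ioo 0 |Y ω| ×ˢ Ioo 0 |Z ω| := by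
      ext ts
      simp only [hB, mem_preimage, mem_setOf_eq, mem_prod, mem_Ioo]
    rw [this, Measure.volume_eq_prod, Measure.prod_prod, Real.volume_Ioo, Real.volume_Ioo,
      sub_zero, sub_zero]
  have h1 : (ν.prod (volume : Measure (ℝ × ℝ))) A =
      ∫⁻ u in Ioo (0:ℝ) 1, ENNReal.ofReal (qY u) * ENNReal.ofReal (qZ u) := by
    rw [Measure.prod_apply hAm]
    refine setLIntegral_congr_fun measurableSet_Ioo ?_
    intro u hu
    beta_reduce
    have : Prod.mk u ⁻¹' A = Ioo 0 (qY u) ×ˢ Ioo 0 (qZ u) := by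
      ext ts
      simp only [hA, mem_preimage, mem_setOf_eq, mem_prod, mem_Ioo]
      exact ⟨fun h => h.2, fun h => ⟨hu, h⟩⟩
    rw [this, Measure.volume_eq_prod, Measure.prod_prod, Real.volume_Ioo, Real.volume_Ioo,
      sub_zero, sub_zero]
  have h2 : (μ.prod (volume : Measure (ℝ × ℝ))) B ≤ (ν.prod (volume : Measure (ℝ × ℝ))) A := by
    rw [Measure.prod_apply_symm hBm, Measure.prod_apply_symm hAm]
    apply lintegral_mono
    rintro ⟨t, s⟩
    show μ ((fun ω => (ω, (t, s))) ⁻¹' B) ≤ ν ((fun u => (u, (t, s))) ⁻¹' A)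
    rcases le_or_gt t 0 with ht | ht
    · have : (fun ω => (ω, (t, s))) ⁻¹' B = ∅ := by
        ext ω; simp only [hB, mem_preimage, mem_setOf_eq, mem_empty_iff_false, iff_false]
        rintro ⟨⟨h1, -⟩, -⟩; linarith
      simp [this]
    rcases le_or_gt s 0 with hs | hs
    · have : (fun ω => (ω, (t, s))) ⁻¹' B = ∅ := by
        ext ω; simp only [hB, mem_preimage, mem_setOf_eq, mem_empty_iff_false, iff_false]
        rintro ⟨-, ⟨h1, -⟩⟩; linarith
      simp [this]
    have hsecB : (fun ω => (ω, (t, s))) ⁻¹' B = {ω | t < |Y ω|} ∩ {ω | s < |Z ω|} := by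
      ext ω
      simp only [hB, mem_preimage, mem_setOf_eq, mem_inter_iff]
      exact ⟨fun h => ⟨h.1.2, h.2.2⟩, fun h => ⟨⟨ht, h.1⟩, ⟨hs, h.2⟩⟩⟩
    have hsecA : (fun u => (u, (t, s))) ⁻¹' A =
        Ioo (max (μ {ω | |Y ω| ≤ t}).toReal (μ {ω | |Z ω| ≤ s}).toReal) 1 := by
      have : (fun u => (u, (t, s))) ⁻¹' A =
          {u : ℝ | u ∈ Ioo (0:ℝ) 1 ∧ t < qY u} ∩ {u : ℝ | u ∈ Ioo (0:ℝ) 1 ∧ s < qZ u} := by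
        ext u
        simp only [hA, mem_preimage, mem_setOf_eq, mem_inter_iff]
        exact ⟨fun h => ⟨⟨h.1, h.2.1.2⟩, ⟨h.1, h.2.2.2⟩⟩,
          fun h => ⟨h.1.1, ⟨ht, h.1.2⟩, ⟨hs, h.2.2⟩⟩⟩
      rw [this, hqY, hqZ, quantile_section μ Y hY t, quantile_section μ Z hZ s,
        Set.Ioo_inter_Ioo, min_self]
    rw [hsecB, hsecA, hν, Measure.restrict_apply measurableSet_Ioo]
    have hsub : Ioo (max (μ {ω | |Y ω| ≤ t}).toReal (μ {ω | |Z ω| ≤ s}).toReal) 1 ∩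
        Ioo (0:ℝ) 1 = Ioo (max (μ {ω | |Y ω| ≤ t}).toReal (μ {ω | |Z ω| ≤ s}).toReal) 1 :=
      Set.inter_eq_left.mpr fun u hu => Set.mem_Ioo.mpr
        ⟨lt_of_le_of_lt (le_trans (hl_c_mem μ Y t).1 (le_max_left _ _)) (Set.mem_Ioo.mp hu).1,
          (Set.mem_Ioo.mp hu).2⟩
    rw [hsub, Real.volume_Ioo]
    have hmin : (1:ℝ) - max (μ {ω | |Y ω| ≤ t}).toReal (μ {ω | |Z ω| ≤ s}).toReal =
        min (1 - (μ {ω | |Y ω| ≤ t}).toReal) (1 - (μ {ω | |Z ω| ≤ s}).toReal) := by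
      rcases le_total (μ {ω | |Y ω| ≤ t}).toReal (μ {ω | |Z ω| ≤ s}).toReal with h | h
      · rw [max_eq_right h, min_eq_right (by linarith)]
      · rw [max_eq_left h, min_eq_left (by linarith)]
    have hofmono : Monotone ENNReal.ofReal := fun _ _ h => ENNReal.ofReal_le_ofReal h
    rw [hmin, hofmono.map_min, ← measure_gt_eq μ Y hY t, ← measure_gt_eq μ Z hZ s]
    exact le_min (measure_mono Set.inter_subset_left) (measure_mono Set.inter_subset_right)
  calc ∫⁻ ω, ENNReal.ofReal |Y ω| * ENNReal.ofReal |Z ω| ∂μ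
      = (μ.prod (volume : Measure (ℝ × ℝ))) B := h3
    _ ≤ (ν.prod (volume : Measure (ℝ × ℝ))) A := h2
    _ = _ := h1


lemma qZ_lintegral_lt_top (Z : Ω → ℝ) (hZ : Measurable Z) (hZi : Integrable Z μ) :
    ∫⁻ u in Ioo (0:ℝ) 1, ENNReal.ofReal (quantile μ (fun ω => |Z ω|) u) < ⊤ := by
  rw [lintegral_quantile_eq μ Z hZ]
  have : ∀ ω, ENNReal.ofReal |Z ω| = ENNReal.ofReal ‖Z ω‖ := by
    intro ω; rw [Real.norm_eq_abs]
  simp_rw [this, ofReal_norm_eq_enorm]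
  exact hZi.2

lemma qZ_integrableOn (Z : Ω → ℝ) (hZ : Measurable Z) (hZi : Integrable Z μ) {α : ℝ} (hα : 0 ≤ α) :
    IntegrableOn (quantile μ (fun ω => |Z ω|)) (Ioo α 1) := by
  set qZ := quantile μ (fun ω => |Z ω|) with hqZ
  have hqZm : Measurable qZ := quantile_measurable μ Z hZ
  refine ⟨hqZm.aestronglyMeasurable.restrict, ?_⟩
  rw [hasFiniteIntegral_iff_ofReal]
  · calc ∫⁻ u in Ioo α 1, ENNReal.ofReal (qZ u) ≤
        ∫⁻ u in Ioo (0:ℝ) 1, ENNReal.ofReal (qZ u) :=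
          lintegral_mono_set (fun u hu => ⟨lt_of_le_of_lt hα hu.1, hu.2⟩)
      _ < ⊤ := qZ_lintegral_lt_top μ Z hZ hZi
  · refine (ae_restrict_iff' measurableSet_Ioo).mpr (Filter.Eventually.of_forall ?_)
    intro u hu
    exact quantile_nonneg μ Z ⟨lt_of_le_of_lt hα hu.1, hu.2⟩

lemma sigma_integrableOn (σ : ℝ → ℝ) (hσ0 : ∀ u ∈ Set.Icc (0 : ℝ) 1, 0 ≤ σ u)
    (hσm : MonotoneOn σ (Set.Icc (0 : ℝ) 1)) (hσmeas : Measurable σ) {α : ℝ} (hα : 0 ≤ α) :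
    IntegrableOn σ (Ioo α 1) := by
  apply Measure.integrableOn_of_bounded (M := σ 1)
  · rw [Real.volume_Ioo]; exact ENNReal.ofReal_ne_top
  · exact hσmeas.aestronglyMeasurable
  · refine (ae_restrict_iff' measurableSet_Ioo).mpr (Filter.Eventually.of_forall ?_)
    intro u hu
    have hu' : u ∈ Icc (0:ℝ) 1 := ⟨le_trans hα hu.1.le, hu.2.le⟩
    rw [Real.norm_eq_abs, abs_of_nonneg (hσ0 u hu')]
    exact hσm hu' ⟨zero_le_one, le_refl 1⟩ hu.2.le

/-- Dual norm certificate gives a lintegral bound on tails. -/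
lemma dual_tail_bound (σ : ℝ → ℝ) (hσ0 : ∀ u ∈ Set.Icc (0 : ℝ) 1, 0 ≤ σ u)
    (hσm : MonotoneOn σ (Set.Icc (0 : ℝ) 1)) (hσmeas : Measurable σ)
    (Z : Ω → ℝ) (hZ : Measurable Z) (hZi : Integrable Z μ)
    {η : ℝ} (hη0 : 0 ≤ η)
    (hη : ∀ α ∈ Set.Ico (0 : ℝ) 1,
      (∫ u in α..1, quantile μ (fun ω => |Z ω|) u) ≤ η * ∫ u in α..1, σ u)
    {α : ℝ} (hα : α ∈ Set.Ico (0:ℝ) 1) :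
    ∫⁻ u in Ioo α 1, ENNReal.ofReal (quantile μ (fun ω => |Z ω|) u) ≤
      ENNReal.ofReal η * ∫⁻ u in Ioo α 1, ENNReal.ofReal (σ u) := by
  set qZ := quantile μ (fun ω => |Z ω|) with hqZ
  have hqZi : IntegrableOn qZ (Ioo α 1) := qZ_integrableOn μ Z hZ hZi hα.1
  have hqZnn : 0 ≤ᵐ[volume.restrict (Ioo α 1)] qZ :=
    (ae_restrict_iff' measurableSet_Ioo).mpr (Filter.Eventually.of_forall
      (fun u hu => quantile_nonneg μ Z ⟨lt_of_le_of_lt hα.1 hu.1, hu.2⟩))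
  have hσi : IntegrableOn σ (Ioo α 1) := sigma_integrableOn σ hσ0 hσm hσmeas hα.1
  have hσnn : 0 ≤ᵐ[volume.restrict (Ioo α 1)] σ :=
    (ae_restrict_iff' measurableSet_Ioo).mpr (Filter.Eventually.of_forall
      (fun u hu => hσ0 u ⟨le_trans hα.1 hu.1.le, hu.2.le⟩))
  have h1 : ∫⁻ u in Ioo α 1, ENNReal.ofReal (qZ u) =
      ENNReal.ofReal (∫ u in α..1, qZ u) := by
    rw [intervalIntegral.integral_of_le hα.2.le, integral_Ioc_eq_integral_Ioo,
      ofReal_integral_eq_lintegral_ofReal hqZi hqZnn]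
  have h2 : ∫⁻ u in Ioo α 1, ENNReal.ofReal (σ u) =
      ENNReal.ofReal (∫ u in α..1, σ u) := by
    rw [intervalIntegral.integral_of_le hα.2.le, integral_Ioc_eq_integral_Ioo,
      ofReal_integral_eq_lintegral_ofReal hσi hσnn]
  rw [h1, h2, ← ENNReal.ofReal_mul hη0]
  exact ENNReal.ofReal_le_ofReal (hη α hα)


lemma pairing_bound (σ : ℝ → ℝ) (hσ0 : ∀ u ∈ Set.Icc (0 : ℝ) 1, 0 ≤ σ u)
    (hσm : MonotoneOn σ (Set.Icc (0 : ℝ) 1)) (hσmeas : Measurable σ)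
    (Y : Ω → ℝ) (hY : Measurable Y)
    (Z : Ω → ℝ) (hZ : Measurable Z) (hZi : Integrable Z μ)
    {η : ℝ} (hη0 : 0 ≤ η)
    (hη : ∀ α ∈ Set.Ico (0 : ℝ) 1,
      (∫ u in α..1, quantile μ (fun ω => |Z ω|) u) ≤ η * ∫ u in α..1, σ u) :
    ∫⁻ u in Ioo (0:ℝ) 1, ENNReal.ofReal (quantile μ (fun ω => |Y ω|) u) *
        ENNReal.ofReal (quantile μ (fun ω => |Z ω|) u) ≤
      ENNReal.ofReal η *
        ∫⁻ u in Ioo (0:ℝ) 1, ENNReal.ofReal (σ u) *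
          ENNReal.ofReal (quantile μ (fun ω => |Y ω|) u) := by
  set qY := quantile μ (fun ω => |Y ω|) with hqY
  set qZ := quantile μ (fun ω => |Z ω|) with hqZ
  set ν := volume.restrict (Ioo (0:ℝ) 1) with hν
  have hqYm : Measurable qY := quantile_measurable μ Y hY
  have hqZm : Measurable qZ := quantile_measurable μ Z hZ
  set C1 : Set (ℝ × ℝ) := {p | p.1 ∈ Ioo (0:ℝ) 1 ∧ 0 < p.2 ∧ p.2 < qY p.1} with hC1
  have hC1m : MeasurableSet C1 := by
    apply MeasurableSet.inter (measurableSet_Ioo.preimage measurable_fst)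
    exact (measurableSet_lt measurable_const measurable_snd).inter
      (measurableSet_lt measurable_snd (hqYm.comp measurable_fst))
  set F : ℝ × ℝ → ℝ≥0∞ := C1.indicator (fun p => ENNReal.ofReal (qZ p.1)) with hF
  set G : ℝ × ℝ → ℝ≥0∞ := C1.indicator (fun p => ENNReal.ofReal (σ p.1)) with hG
  have hFm : Measurable F :=
    (Measurable.indicator (measurable_ofReal.comp (hqZm.comp measurable_fst)) hC1m)
  have hGm : Measurable G :=
    (Measurable.indicator (measurable_ofReal.comp (hσmeas.comp measurable_fst)) hC1m)
  -- first order: u then t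
  have horder1 : ∀ g : ℝ → ℝ, ∀ u ∈ Ioo (0:ℝ) 1,
      ∫⁻ t, C1.indicator (fun p => ENNReal.ofReal (g p.1)) (u, t) ∂volume =
        ENNReal.ofReal (g u) * ENNReal.ofReal (qY u) := by
    intro g u hu
    have : (fun t => C1.indicator (fun p => ENNReal.ofReal (g p.1)) (u, t)) =
        (Ioo 0 (qY u)).indicator (fun _ => ENNReal.ofReal (g u)) := by
      ext t
      rw [Set.indicator_apply, Set.indicator_apply]
      congr 1
      simp only [hC1, mem_setOf_eq, mem_Ioo, eq_iff_iff]
      exact ⟨fun h => h.2, fun h => ⟨hu, h⟩⟩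
    rw [this, lintegral_indicator measurableSet_Ioo, setLIntegral_const,
      Real.volume_Ioo, sub_zero]
  have hF1 : ∫⁻ p, F p ∂(ν.prod volume) =
      ∫⁻ u in Ioo (0:ℝ) 1, ENNReal.ofReal (qY u) * ENNReal.ofReal (qZ u) := by
    rw [lintegral_prod F hFm.aemeasurable]
    refine setLIntegral_congr_fun measurableSet_Ioo ?_
    intro u hu
    beta_reduce
    rw [hF, horder1 qZ u hu, mul_comm]
  have hG1 : ∫⁻ p, G p ∂(ν.prod volume) =
      ∫⁻ u in Ioo (0:ℝ) 1, ENNReal.ofReal (σ u) * ENNReal.ofReal (qY u) := by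
    rw [lintegral_prod G hGm.aemeasurable]
    refine setLIntegral_congr_fun measurableSet_Ioo ?_
    intro u hu
    beta_reduce
    rw [hG, horder1 σ u hu]
  -- second order: for fixed t
  have hsec : ∀ t : ℝ, 0 < t → ∀ g : ℝ → ℝ≥0∞, Measurable g →
      ∫⁻ u, C1.indicator (fun p => g p.1) (u, t) ∂ν =
        ∫⁻ u in Ioo ((μ {ω | |Y ω| ≤ t}).toReal) 1, g u ∂volume := by
    intro t ht g hg
    have : (fun u => C1.indicator (fun p => g p.1) (u, t)) =
        (Ioo ((μ {ω | |Y ω| ≤ t}).toReal) 1).indicator g := by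
      ext u
      rw [Set.indicator_apply, Set.indicator_apply]
      congr 1
      have := quantile_section μ Y hY t
      simp only [hC1, mem_setOf_eq, eq_iff_iff]
      constructor
      · intro h
        rw [← this]; exact ⟨h.1, h.2.2⟩
      · intro h
        rw [← this] at h; exact ⟨h.1, ht, h.2⟩
    rw [this, lintegral_indicator measurableSet_Ioo, hν,
      Measure.restrict_restrict measurableSet_Ioo,
      Set.inter_eq_left.mpr (fun u hu => Set.mem_Ioo.mpr
        ⟨lt_of_le_of_lt (hl_c_mem μ Y t).1 (Set.mem_Ioo.mp hu).1, (Set.mem_Ioo.mp hu).2⟩)]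
  have hFG : ∫⁻ p, F p ∂(ν.prod volume) ≤ ENNReal.ofReal η * ∫⁻ p, G p ∂(ν.prod volume) := by
    rw [lintegral_prod_symm F hFm.aemeasurable, lintegral_prod_symm G hGm.aemeasurable,
      ← lintegral_const_mul' _ _ ENNReal.ofReal_ne_top]
    apply lintegral_mono
    intro t
    show (∫⁻ u, F (u, t) ∂ν) ≤ ENNReal.ofReal η * ∫⁻ u, G (u, t) ∂ν
    rcases le_or_gt t 0 with ht | ht
    · have : ∀ u : ℝ, F (u, t) = 0 := by
        intro u
        rw [hF, Set.indicator_apply_eq_zero.mpr]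
        intro hmem
        exact absurd hmem.2.1 (not_lt.mpr ht)
      simp only [this]
      simp
    · rw [hF, hG, hsec t ht (fun x => ENNReal.ofReal (qZ x)) (measurable_ofReal.comp hqZm),
        hsec t ht (fun x => ENNReal.ofReal (σ x)) (measurable_ofReal.comp hσmeas)]
      rcases lt_or_ge ((μ {ω | |Y ω| ≤ t}).toReal) 1 with hc | hc
      · exact dual_tail_bound μ σ hσ0 hσm hσmeas Z hZ hZi hη0 hη
          ⟨(hl_c_mem μ Y t).1, hc⟩
      · rw [Set.Ioo_eq_empty (not_lt.mpr hc)]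
        simp
  calc ∫⁻ u in Ioo (0:ℝ) 1, ENNReal.ofReal (qY u) * ENNReal.ofReal (qZ u)
      = ∫⁻ p, F p ∂(ν.prod volume) := hF1.symm
    _ ≤ ENNReal.ofReal η * ∫⁻ p, G p ∂(ν.prod volume) := hFG
    _ = _ := by rw [hG1]

end aux

/-- The σ-norm ‖Y‖_σ = ∫₀¹ σ(u)·F_{|Y|}^{-1}(u) du, valued in [0,∞]. -/
noncomputable def sigmaNorm {Ω : Type*} [MeasurableSpace Ω] (μ : Measure Ω)
    (σ : ℝ → ℝ) (Y : Ω → ℝ) : ℝ≥0∞ :=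
  ∫⁻ u in Set.Ioo (0 : ℝ) 1, ENNReal.ofReal (σ u * quantile μ (fun ω => |Y ω|) u)

/-- The Average Value-at-Risk at level α. -/
noncomputable def avar {Ω : Type*} [MeasurableSpace Ω] (μ : Measure Ω)
    (X : Ω → ℝ) (α : ℝ) : ℝ :=
  (1 - α)⁻¹ * ∫ u in α..1, quantile μ X u

/-- The dual σ-norm ‖Z‖_σ* = inf{η ≥ 0 : ∫_α¹ F_{|Z|}^{-1} ≤ η ∫_α¹ σ for all α ∈ [0,1)}. -/
noncomputable def sigmaDualNorm {Ω : Type*} [MeasurableSpace Ω] (μ : Measure Ω)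
    (σ : ℝ → ℝ) (Z : Ω → ℝ) : ℝ :=
  sInf {η : ℝ | 0 ≤ η ∧ ∀ α ∈ Set.Ico (0 : ℝ) 1,
    (∫ u in α..1, quantile μ (fun ω => |Z ω|) u) ≤ η * ∫ u in α..1, σ u}

/-- Hölder-type inequality for the σ-norm pairing:
|E[Y·Z]| ≤ ‖Y‖_σ · ‖Z‖_σ*. -/
theorem stmt17 {Ω : Type*} [MeasurableSpace Ω] (μ : Measure Ω) [IsProbabilityMeasure μ]
    (σ : ℝ → ℝ) (hσ0 : ∀ u ∈ Set.Icc (0 : ℝ) 1, 0 ≤ σ u)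
    (hσm : MonotoneOn σ (Set.Icc (0 : ℝ) 1)) (hσmeas : Measurable σ)
    (hσ1 : (∫ u in (0 : ℝ)..1, σ u) = 1)
    (Y : Ω → ℝ) (hYm : Measurable Y) (hYσ : sigmaNorm μ σ Y < ⊤)
    (Z : Ω → ℝ) (hZm : Measurable Z) (hZi : Integrable Z μ)
    (hZfin : ∃ η : ℝ, 0 ≤ η ∧ ∀ α ∈ Set.Ico (0 : ℝ) 1,
      (∫ u in α..1, quantile μ (fun ω => |Z ω|) u) ≤ η * ∫ u in α..1, σ u) :
    |∫ ω, Y ω * Z ω ∂μ| ≤ (sigmaNorm μ σ Y).toReal * sigmaDualNorm μ σ Z := by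
  
  have hsig : ∫⁻ u in Ioo (0:ℝ) 1,
      ENNReal.ofReal (σ u) * ENNReal.ofReal (quantile μ (fun ω => |Y ω|) u) =
      sigmaNorm μ σ Y := by
    rw [sigmaNorm]
    refine (setLIntegral_congr_fun measurableSet_Ioo
      (fun u hu => ?_)).symm
    exact ENNReal.ofReal_mul (hσ0 u ⟨hu.1.le, hu.2.le⟩)
  have key : ∀ η : ℝ, 0 ≤ η →
      (∀ α ∈ Set.Ico (0 : ℝ) 1,
        (∫ u in α..1, quantile μ (fun ω => |Z ω|) u) ≤ η * ∫ u in α..1, σ u) →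
      |∫ ω, Y ω * Z ω ∂μ| ≤ (sigmaNorm μ σ Y).toReal * η := by
    intro η hη0 hη
    have hHL2 : ∫⁻ ω, ENNReal.ofReal |Y ω * Z ω| ∂μ ≤ sigmaNorm μ σ Y * ENNReal.ofReal η := by
      calc ∫⁻ ω, ENNReal.ofReal |Y ω * Z ω| ∂μ
          = ∫⁻ ω, ENNReal.ofReal |Y ω| * ENNReal.ofReal |Z ω| ∂μ := by
            apply lintegral_congr
            intro ω
            rw [abs_mul, ENNReal.ofReal_mul (abs_nonneg _)]
        _ ≤ ∫⁻ u in Ioo (0:ℝ) 1, ENNReal.ofReal (quantile μ (fun ω => |Y ω|) u) *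
              ENNReal.ofReal (quantile μ (fun ω => |Z ω|) u) :=
            hardy_littlewood μ Y Z hYm hZm
        _ ≤ ENNReal.ofReal η * ∫⁻ u in Ioo (0:ℝ) 1, ENNReal.ofReal (σ u) *
              ENNReal.ofReal (quantile μ (fun ω => |Y ω|) u) :=
            pairing_bound μ σ hσ0 hσm hσmeas Y hYm Z hZm hZi hη0 hη
        _ = sigmaNorm μ σ Y * ENNReal.ofReal η := by rw [hsig, mul_comm]
    by_cases hi : Integrable (fun ω => Y ω * Z ω) μ
    · have h1 : |∫ ω, Y ω * Z ω ∂μ| ≤ ∫ ω, |Y ω * Z ω| ∂μ := by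
        have := norm_integral_le_integral_norm (μ := μ) (fun ω => Y ω * Z ω)
        simpa [Real.norm_eq_abs, abs_mul] using this
      have h1' : |∫ ω, Y ω * Z ω ∂μ| ≤ ∫ ω, |Y ω * Z ω| ∂μ := by
        simpa [abs_mul] using h1
      have h2 : ∫ ω, |Y ω * Z ω| ∂μ = (∫⁻ ω, ENNReal.ofReal |Y ω * Z ω| ∂μ).toReal :=
        integral_eq_lintegral_of_nonneg_ae (Filter.Eventually.of_forall fun ω => abs_nonneg _)
          hi.abs.aestronglyMeasurable
      have h3 : (∫⁻ ω, ENNReal.ofReal |Y ω * Z ω| ∂μ).toReal ≤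
          (sigmaNorm μ σ Y * ENNReal.ofReal η).toReal :=
        ENNReal.toReal_mono (ENNReal.mul_ne_top hYσ.ne ENNReal.ofReal_ne_top) hHL2
      rw [ENNReal.toReal_mul, ENNReal.toReal_ofReal hη0] at h3
      linarith
    · rw [integral_undef hi]
      simpa using mul_nonneg ENNReal.toReal_nonneg hη0
  obtain ⟨η₀, hη₀0, hη₀⟩ := hZfin
  have hSne : {η : ℝ | 0 ≤ η ∧ ∀ α ∈ Set.Ico (0 : ℝ) 1,
      (∫ u in α..1, quantile μ (fun ω => |Z ω|) u) ≤ η * ∫ u in α..1, σ u}.Nonempty :=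
    ⟨η₀, hη₀0, hη₀⟩
  have hdnn : 0 ≤ sigmaDualNorm μ σ Z := Real.sInf_nonneg fun x hx => hx.1
  rcases eq_or_lt_of_le (ENNReal.toReal_nonneg : 0 ≤ (sigmaNorm μ σ Y).toReal) with h0 | hpos
  · have h := key η₀ hη₀0 hη₀
    rw [← h0] at h ⊢
    simpa using h
  · have hle : |∫ ω, Y ω * Z ω ∂μ| / (sigmaNorm μ σ Y).toReal ≤ sigmaDualNorm μ σ Z := by
      rw [sigmaDualNorm]
      refine le_csInf hSne fun b hb => ?_
      rw [div_le_iff₀ hpos]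
      calc |∫ ω, Y ω * Z ω ∂μ| ≤ (sigmaNorm μ σ Y).toReal * b := key b hb.1 hb.2
        _ = b * (sigmaNorm μ σ Y).toReal := mul_comm _ _
    have := (div_le_iff₀ hpos).mp hle
    linarith [mul_comm (sigmaDualNorm μ σ Z) (sigmaNorm μ σ Y).toReal, this]
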